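/- The epistemic value of a hypothesis is the supremum of the epistemic values of its points: ev(H|x) = sup_{θ₀∈H} ev({θ₀}|x), where ev(H|x) = 1 − P(T(H)|x) and T(H) = {θ₁∈Θ : ∀θ₀∈H, s(θ₁|x) > s(θ₀|x)}. -/
import Mathlib

open MeasureTheory

def tangentSet {Θ : Type*} (s : Θ → ℝ) (H : Set Θ) : Set Θ :=
  {θ₁ | ∀ θ₀ ∈ H, s θ₁ > s θ₀}

noncomputable def ev {Θ : Type*} [MeasurableSpace Θ] (P : Measure Θ) (s : Θ → ℝ)
    (H : Set Θ) : ENNReal :=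
  1 - P (tangentSet s H)

lemma tangent_singleton {Θ : Type*} (s : Θ → ℝ) (θ₀ : Θ) :
    tangentSet s {θ₀} = {θ₁ | s θ₁ > s θ₀} := by
  ext θ₁; simp [tangentSet]

lemma key {Θ : Type*} [MeasurableSpace Θ] (P : Measure Θ) [IsProbabilityMeasure P]
    (s : Θ → ℝ)
    (hmeas : ∀ H : Set Θ, MeasurableSet (tangentSet s H))
    (H : Set Θ) (hH : H.Nonempty) :
    P (tangentSet s H) = ⨅ θ₀ ∈ H, P (tangentSet s {θ₀}) := by
  refine le_antisymm (le_iInf₂ fun θ₀ hθ₀ => measure_mono ?_) ?_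
  · intro θ₁ h₁
    rw [tangent_singleton]
    exact h₁ θ₀ hθ₀
  · by_cases hatt : ∃ θ' ∈ H, ∀ θ₀ ∈ H, s θ₀ ≤ s θ'
    · obtain ⟨θ', hθ'H, hmax⟩ := hatt
      have hTeq : tangentSet s H = tangentSet s {θ'} := by
        ext θ₁
        rw [tangent_singleton]
        constructor
        · exact fun h => h θ' hθ'H
        · exact fun h θ₀ hθ₀ => lt_of_le_of_lt (hmax θ₀ hθ₀) h
      rw [hTeq]
      exact iInf₂_le θ' hθ'H
    · -- not attained
      push_neg at hatt
      -- build sequence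
      have hseq : ∃ θseq : ℕ → Θ, (∀ n, θseq n ∈ H) ∧
          (∀ θ₁, (∀ n, s θ₁ > s (θseq n)) → θ₁ ∈ tangentSet s H) := by
        by_cases hbdd : BddAbove (s '' H)
        · set c := sSup (s '' H) with hc
          have hne : (s '' H).Nonempty := hH.image s
          have hlt : ∀ θ₀ ∈ H, s θ₀ < c := by
            intro θ₀ hθ₀
            rcases hatt θ₀ hθ₀ with ⟨θ', hθ', hgt⟩
            exact lt_of_lt_of_le hgt (le_csSup hbdd ⟨θ', hθ', rfl⟩)
          have hex : ∀ n : ℕ, ∃ θ' ∈ H, c - 1/(n+1) < s θ' := by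
            intro n
            have : c - 1/(n+1) < c := by
              have : (0:ℝ) < 1/(n+1) := by positivity
              linarith
            obtain ⟨x, hx, hlt'⟩ := exists_lt_of_lt_csSup hne this
            obtain ⟨θ', hθ', rfl⟩ := hx
            exact ⟨θ', hθ', hlt'⟩
          choose θseq hθseqH hθseq using hex
          refine ⟨θseq, hθseqH, fun θ₁ h₁ => ?_⟩
          have hge : s θ₁ ≥ c := by
            by_contra hlt'
            push_neg at hlt'
            obtain ⟨n, hn⟩ := exists_nat_one_div_lt (by linarith : 0 < c - s θ₁)
            have := h₁ n
            have := hθseq n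
            have : (1:ℝ)/(n+1) < c - s θ₁ := hn
            linarith [h₁ n, hθseq n]
          exact fun θ₀ hθ₀ => lt_of_lt_of_le (hlt θ₀ hθ₀) hge
        · rw [not_bddAbove_iff] at hbdd
          have hex : ∀ n : ℕ, ∃ θ' ∈ H, (n:ℝ) < s θ' := by
            intro n
            obtain ⟨x, hx, hlt'⟩ := hbdd n
            obtain ⟨θ', hθ', rfl⟩ := hx
            exact ⟨θ', hθ', hlt'⟩
          choose θseq hθseqH hθseq using hex
          refine ⟨θseq, hθseqH, fun θ₁ h₁ => ?_⟩
          exfalso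
          obtain ⟨n, hn⟩ := exists_nat_gt (s θ₁)
          exact absurd (lt_trans (hθseq n) (h₁ n)) (not_lt.mpr (le_of_lt hn))
      obtain ⟨θseq, hθseqH, hcap⟩ := hseq
      have hsub : (⋂ n, tangentSet s {θseq n}) ⊆ tangentSet s H := by
        intro θ₁ h₁
        apply hcap
        intro n
        have := Set.mem_iInter.mp h₁ n
        rw [tangent_singleton] at this
        exact this
      have hdir : Directed (· ⊇ ·) (fun n => tangentSet s {θseq n}) := by
        intro m n
        rcases le_total (s (θseq m)) (s (θseq n)) with h | h
        · exact ⟨n, by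
            simp only [tangent_singleton]
            exact fun θ₁ h₁ => lt_of_le_of_lt h h₁, subset_rfl⟩
        · exact ⟨m, subset_rfl, by
            simp only [tangent_singleton]
            exact fun θ₁ h₁ => lt_of_le_of_lt h h₁⟩
      have := Directed.measure_iInter (μ := P) (s := fun n => tangentSet s {θseq n})
        (fun n => (hmeas _).nullMeasurableSet) hdir
        ⟨0, measure_ne_top P _⟩
      calc ⨅ θ₀ ∈ H, P (tangentSet s {θ₀}) ≤ ⨅ n, P (tangentSet s {θseq n}) :=
            le_iInf fun n => iInf₂_le (θseq n) (hθseqH n)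
        _ = P (⋂ n, tangentSet s {θseq n}) := this.symm
        _ ≤ P (tangentSet s H) := measure_mono hsub

theorem stmt_7 {Θ : Type*} [MeasurableSpace Θ] (P : Measure Θ) [IsProbabilityMeasure P]
    (s : Θ → ℝ) (hs : Measurable s)
    (hmeas : ∀ H : Set Θ, MeasurableSet (tangentSet s H))
    (H : Set Θ) (hH : H.Nonempty) :
    ev P s H = ⨆ θ₀ ∈ H, ev P s {θ₀} := by
  unfold ev
  rw [key P s hmeas H hH]
  rw [iInf_subtype', ENNReal.sub_iInf, iSup_subtype']
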